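/- Let K and V be the Kullback–Leibler divergence and the KL-variance between two centered p-dimensional Gaussian densities f_{Σ₀} and f_Σ, with dᵢ the eigenvalues of Σ₀^{1/2}Σ^{-1}Σ₀^{1/2}. Then V(f_{Σ₀}, f_Σ) = ½ Σᵢ (1 − dᵢ)² + K(f_{Σ₀}, f_Σ)², and if additionally K ≤ Σᵢ(1−dᵢ)² and Σᵢ(1−dᵢ)² ≤ 1, then V ≤ (3/2) Σᵢ (1 − dᵢ)². -/

import Mathlib

open Matrix Real MeasureTheory Finset

noncomputable def frobNorm {p : ℕ} (A : Matrix (Fin p) (Fin p) ℝ) : ℝ :=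
  Real.sqrt (∑ i, ∑ j, (A i j) ^ 2)

noncomputable def opNorm {p : ℕ} (A : Matrix (Fin p) (Fin p) ℝ) : ℝ :=
  ‖Matrix.toEuclideanCLM (𝕜 := ℝ) A‖

/-- Density of the centered p-dimensional Gaussian with covariance S. -/
noncomputable def gaussDensity {p : ℕ} (S : Matrix (Fin p) (Fin p) ℝ) (x : Fin p → ℝ) : ℝ :=
  (2 * Real.pi) ^ (-(p : ℝ) / 2) * S.det ^ (-(1 : ℝ) / 2) *
    Real.exp (-(1 / 2) * (x ⬝ᵥ S⁻¹.mulVec x))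

/-- Kullback–Leibler divergence between the centered Gaussians. -/
noncomputable def KLdiv {p : ℕ} (S0 S : Matrix (Fin p) (Fin p) ℝ) : ℝ :=
  ∫ x, gaussDensity S0 x * Real.log (gaussDensity S0 x / gaussDensity S x)

/-- KL-variance between the centered Gaussians. -/
noncomputable def KLvar {p : ℕ} (S0 S : Matrix (Fin p) (Fin p) ℝ) : ℝ :=
  ∫ x, gaussDensity S0 x * (Real.log (gaussDensity S0 x / gaussDensity S x)) ^ 2

/- ### Auxiliary one-dimensional Gaussian integrals -/

noncomputable def phi (t : ℝ) : ℝ := Real.exp (-(1/2) * t ^ 2)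

lemma phi_integrable : Integrable phi :=
  integrable_exp_neg_mul_sq (by norm_num : (0:ℝ) < 1/2)

lemma pow_mul_phi_integrable (n : ℕ) : Integrable (fun t : ℝ => t ^ n * phi t) := by
  have := integrable_rpow_mul_exp_neg_mul_sq (b := 1/2) (by norm_num) (s := (n:ℝ))
    (lt_of_lt_of_le neg_one_lt_zero (Nat.cast_nonneg n))
  simpa [phi, Real.rpow_natCast] using this

lemma phi_mul_pow_integrable (n : ℕ) : Integrable (fun t : ℝ => phi t * t ^ n) := by
  simpa [mul_comm] using pow_mul_phi_integrable n

lemma integral_phi : ∫ t : ℝ, phi t = Real.sqrt (2 * π) := by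
  have h := integral_gaussian (1/2 : ℝ)
  rw [show (π / (1/2 : ℝ)) = 2 * π by ring] at h
  simpa [phi] using h

lemma integral_pow_phi_Ioi (q : ℕ) :
    ∫ t in Set.Ioi (0:ℝ), t ^ q * phi t
      = ((1:ℝ)/2) ^ (-(((q:ℝ)) + 1) / 2) * (1 / 2) * Real.Gamma (((q:ℝ) + 1) / 2) := by
  have h := integral_rpow_mul_exp_neg_mul_rpow (p := 2) (q := (q:ℝ)) (b := 1/2)
    (by norm_num) (lt_of_lt_of_le neg_one_lt_zero (Nat.cast_nonneg q)) (by norm_num)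
  simp_rw [Real.rpow_two, Real.rpow_natCast, phi] at h ⊢
  exact h

lemma integral_even_eq_two_mul (f : ℝ → ℝ) (hf : Integrable f)
    (he : ∀ x, f (-x) = f x) :
    ∫ t : ℝ, f t = 2 * ∫ t in Set.Ioi (0:ℝ), f t := by
  have hsplit : ∫ t : ℝ, f t = (∫ t in Set.Iic (0:ℝ), f t) + ∫ t in Set.Ioi (0:ℝ), f t := by
    rw [← setIntegral_union (Set.Iic_disjoint_Ioi le_rfl) measurableSet_Ioi
      hf.integrableOn hf.integrableOn, Set.Iic_union_Ioi, setIntegral_univ]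
  have hneg : ∫ t in Set.Iic (0:ℝ), f t = ∫ t in Set.Ioi (0:ℝ), f t := by
    rw [← neg_zero, ← integral_comp_neg_Ioi]
    simp [he]
  rw [hsplit, hneg]; ring

lemma half_rpow_neg (y : ℝ) : ((1:ℝ)/2) ^ (-y) = 2 ^ y := by
  rw [one_div, ← Real.rpow_neg_one (2:ℝ), ← Real.rpow_mul (by norm_num : (0:ℝ) ≤ 2)]
  norm_num

lemma integral_sq_phi : ∫ t : ℝ, t ^ 2 * phi t = Real.sqrt (2 * π) := by
  rw [integral_even_eq_two_mul _ (pow_mul_phi_integrable 2) (by intro x; simp [phi]),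
    integral_pow_phi_Ioi 2]
  rw [show (-(((2:ℕ):ℝ) + 1) / 2) = -((3:ℝ)/2) by norm_num, half_rpow_neg,
    show ((((2:ℕ):ℝ)) + 1) / 2 = (1:ℝ)/2 + 1 by norm_num,
    Real.Gamma_add_one (by norm_num : (1:ℝ)/2 ≠ 0), Real.Gamma_one_half_eq,
    show (3:ℝ)/2 = 1 + 1/2 by ring, Real.rpow_add (by norm_num : (0:ℝ) < 2), Real.rpow_one,
    ← Real.sqrt_eq_rpow, Real.sqrt_mul (by norm_num : (0:ℝ) ≤ 2)]
  ring

lemma integral_pow4_phi : ∫ t : ℝ, t ^ 4 * phi t = 3 * Real.sqrt (2 * π) := by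
  rw [integral_even_eq_two_mul _ (pow_mul_phi_integrable 4)
      (by intro x; show (-x)^4 * phi (-x) = x^4 * phi x; simp [phi]; ring),
    integral_pow_phi_Ioi 4]
  rw [show (-(((4:ℕ):ℝ) + 1) / 2) = -((5:ℝ)/2) by norm_num,
    show ((((4:ℕ):ℝ)) + 1) / 2 = (3:ℝ)/2 + 1 by norm_num, half_rpow_neg,
    Real.Gamma_add_one (by norm_num : (3:ℝ)/2 ≠ 0),
    show (3:ℝ)/2 = 1/2 + 1 by ring,
    Real.Gamma_add_one (by norm_num : (1:ℝ)/2 ≠ 0), Real.Gamma_one_half_eq,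
    show (5:ℝ)/2 = 1 + 1 + 1/2 by ring, Real.rpow_add (by norm_num : (0:ℝ) < 2),
    Real.rpow_add (by norm_num : (0:ℝ) < 2), Real.rpow_one,
    ← Real.sqrt_eq_rpow, Real.sqrt_mul (by norm_num : (0:ℝ) ≤ 2)]
  ring

/- ### Product integrals over `Fin p → ℝ` -/

lemma prod_phi_mul_eq {p : ℕ} (i : Fin p) (m : ℕ) (z : Fin p → ℝ) :
    (∏ k, phi (z k)) * z i ^ m = ∏ k, (phi (z k) * (if k = i then z k ^ m else 1)) := by
  rw [Finset.prod_mul_distrib, Finset.prod_ite_eq' univ i (fun k => z k ^ m)]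
  simp

lemma prod_phi_mul_eq2 {p : ℕ} (i j : Fin p) (z : Fin p → ℝ) :
    (∏ k, phi (z k)) * ((if (i:Fin p) = j then z i ^ 4 else z i ^ 2 * z j ^ 2)) =
      ∏ k, (phi (z k) * (if k = i then z k ^ 2 else 1) * (if k = j then z k ^ 2 else 1)) := by
  simp_rw [Finset.prod_mul_distrib, Finset.prod_ite_eq' univ i (fun k => z k ^ 2),
    Finset.prod_ite_eq' univ j (fun k => z k ^ 2)]
  by_cases hij : i = j
  · subst hij; simp; ring
  · simp [hij]; ring

lemma integrable_prod_phi (p : ℕ) : Integrable (fun z : Fin p → ℝ => ∏ i, phi (z i)) :=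
  Integrable.fintype_prod (fun _ => phi_integrable)

lemma integrable_prod_phi_pow {p : ℕ} (i : Fin p) (m : ℕ) :
    Integrable (fun z : Fin p → ℝ => (∏ k, phi (z k)) * z i ^ m) := by
  simp_rw [prod_phi_mul_eq]
  apply Integrable.fintype_prod (f := fun k t => phi t * (if k = i then t ^ m else 1))
  intro k
  by_cases hk : k = i
  · simpa [hk] using phi_mul_pow_integrable m
  · simpa [hk] using phi_integrable

lemma integrable_prod_phi_pow2 {p : ℕ} (i j : Fin p) :
    Integrable (fun z : Fin p → ℝ => (∏ k, phi (z k)) * (z i ^ 2 * z j ^ 2)) := by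
  by_cases hij : i = j
  · subst hij
    have : ∀ z : Fin p → ℝ, z i ^ 2 * z i ^ 2 = z i ^ 4 := by intro z; ring
    simp_rw [this]
    exact integrable_prod_phi_pow i 4
  · have h : ∀ z : Fin p → ℝ, (∏ k, phi (z k)) * (z i ^ 2 * z j ^ 2)
        = ∏ k, (phi (z k) * (if k = i then z k ^ 2 else 1) * (if k = j then z k ^ 2 else 1)) := by
      intro z
      rw [← prod_phi_mul_eq2 i j z, if_neg hij]
    simp_rw [h]
    apply Integrable.fintype_prod
      (f := fun k t => phi t * (if k = i then t ^ 2 else 1) * (if k = j then t ^ 2 else 1))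
    intro k
    by_cases hk : k = i
    · subst hk
      simpa [hij, mul_assoc] using phi_mul_pow_integrable 2
    · by_cases hk' : k = j
      · subst hk'
        simpa [hk, hij] using phi_mul_pow_integrable 2
      · simpa [hk, hk'] using phi_integrable

lemma integral_prod_phi (p : ℕ) :
    ∫ z : Fin p → ℝ, ∏ i, phi (z i) = Real.sqrt (2 * π) ^ p := by
  rw [MeasureTheory.volume_pi, MeasureTheory.integral_fintype_prod_eq_pow phi, integral_phi]
  simp

lemma integral_prod_phi_pow_two {p : ℕ} (i : Fin p) :
    ∫ z : Fin p → ℝ, (∏ k, phi (z k)) * z i ^ 2 = Real.sqrt (2 * π) ^ p := by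
  simp_rw [prod_phi_mul_eq]
  rw [MeasureTheory.volume_pi, MeasureTheory.integral_fintype_prod_eq_prod
    (f := fun k t => phi t * (if k = i then t ^ 2 else 1))]
  have h : ∀ k : Fin p, ∫ t : ℝ, phi t * (if k = i then t ^ 2 else 1) = Real.sqrt (2 * π) := by
    intro k
    by_cases hk : k = i
    · simp only [hk, if_true]
      rw [show (fun t : ℝ => phi t * t ^ 2) = fun t : ℝ => t ^ 2 * phi t from
        funext fun t => mul_comm _ _, integral_sq_phi]
    · simp only [hk, if_false, mul_one, integral_phi]
  rw [Finset.prod_congr rfl (fun k _ => h k), Finset.prod_const]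
  simp

lemma integral_prod_phi_pow_mix {p : ℕ} (i j : Fin p) :
    ∫ z : Fin p → ℝ, (∏ k, phi (z k)) * (z i ^ 2 * z j ^ 2)
      = (if i = j then 3 else 1) * Real.sqrt (2 * π) ^ p := by
  by_cases hij : i = j
  · subst hij
    have h4 : ∀ z : Fin p → ℝ, z i ^ 2 * z i ^ 2 = z i ^ 4 := by intro z; ring
    rw [if_pos rfl]
    simp_rw [h4, prod_phi_mul_eq]
    rw [MeasureTheory.volume_pi, MeasureTheory.integral_fintype_prod_eq_prod
      (f := fun k t => phi t * (if k = i then t ^ 4 else 1))]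
    have h : ∀ k : Fin p, ∫ t : ℝ, phi t * (if k = i then t ^ 4 else 1)
        = (if k = i then 3 else 1) * Real.sqrt (2 * π) := by
      intro k
      by_cases hk : k = i
      · simp only [hk, if_true]
        rw [show (fun t : ℝ => phi t * t ^ 4) = fun t : ℝ => t ^ 4 * phi t from
          funext fun t => mul_comm _ _, integral_pow4_phi]
      · simp only [hk, if_false, mul_one, integral_phi, one_mul]
    rw [Finset.prod_congr rfl (fun k _ => h k), Finset.prod_mul_distrib,
      Finset.prod_ite_eq' univ i (fun _ => (3:ℝ)), Finset.prod_const]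
    simp
  · have h : ∀ z : Fin p → ℝ, (∏ k, phi (z k)) * (z i ^ 2 * z j ^ 2)
        = ∏ k, (phi (z k) * (if k = i then z k ^ 2 else 1) * (if k = j then z k ^ 2 else 1)) := by
      intro z; rw [← prod_phi_mul_eq2 i j z, if_neg hij]
    simp_rw [h]
    rw [MeasureTheory.volume_pi, MeasureTheory.integral_fintype_prod_eq_prod
      (f := fun k t => phi t * (if k = i then t ^ 2 else 1) * (if k = j then t ^ 2 else 1))]
    have h2 : ∀ k : Fin p, ∫ t : ℝ,
        phi t * (if k = i then t ^ 2 else 1) * (if k = j then t ^ 2 else 1)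
        = Real.sqrt (2 * π) := by
      intro k
      by_cases hk : k = i
      · subst hk
        simp only [if_pos rfl, if_true, if_neg hij, mul_one]
        rw [show (fun t : ℝ => phi t * t ^ 2) = fun t : ℝ => t ^ 2 * phi t from
          funext fun t => mul_comm _ _, integral_sq_phi]
      · by_cases hk' : k = j
        · subst hk'
          simp only [hk, if_false, if_pos rfl, if_true, mul_one, one_mul]
          rw [show (fun t : ℝ => phi t * t ^ 2) = fun t : ℝ => t ^ 2 * phi t from
            funext fun t => mul_comm _ _, integral_sq_phi]
        · simp only [hk, hk', if_false, mul_one, integral_phi]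
    rw [Finset.prod_congr rfl (fun k _ => h2 k), Finset.prod_const, if_neg hij]
    simp
lemma integral_P_mul_lin {p : ℕ} (lam : Fin p → ℝ) (c : ℝ) :
    ∫ z : Fin p → ℝ, (∏ i, phi (z i)) * (c + (1/2) * ∑ i, lam i * z i ^ 2)
      = Real.sqrt (2 * π) ^ p * (c + (1/2) * ∑ i, lam i) := by
  have hpt : ∀ z : Fin p → ℝ, (∏ i, phi (z i)) * (c + (1/2) * ∑ i, lam i * z i ^ 2)
      = c * (∏ i, phi (z i)) + ∑ i, ((1/2) * lam i) * ((∏ k, phi (z k)) * z i ^ 2) := by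
    intro z
    rw [mul_add, Finset.mul_sum, mul_comm (∏ i, phi (z i)) c]
    congr 1
    rw [Finset.mul_sum]
    exact Finset.sum_congr rfl fun i _ => by ring
  simp_rw [hpt]
  rw [integral_add ((integrable_prod_phi p).const_mul c)
      (integrable_finset_sum _ fun i _ => (integrable_prod_phi_pow i 2).const_mul _),
    integral_finset_sum _ fun i _ => (integrable_prod_phi_pow i 2).const_mul _,
    integral_const_mul, integral_prod_phi]
  simp_rw [integral_const_mul, integral_prod_phi_pow_two]
  rw [← Finset.sum_mul, ← Finset.mul_sum]
  ring

lemma integral_P_mul_sq {p : ℕ} (lam : Fin p → ℝ) (c : ℝ) :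
    ∫ z : Fin p → ℝ, (∏ i, phi (z i)) * (c + (1/2) * ∑ i, lam i * z i ^ 2) ^ 2
      = Real.sqrt (2 * π) ^ p *
        ((c + (1/2) * ∑ i, lam i) ^ 2 + (1/2) * ∑ i, lam i ^ 2) := by
  have hpt : ∀ z : Fin p → ℝ, (∏ i, phi (z i)) * (c + (1/2) * ∑ i, lam i * z i ^ 2) ^ 2
      = (c^2 * (∏ i, phi (z i)) + ∑ i, (c * lam i) * ((∏ k, phi (z k)) * z i ^ 2))
        + ∑ i, ∑ j, ((1/4) * (lam i * lam j)) * ((∏ k, phi (z k)) * (z i ^ 2 * z j ^ 2)) := by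
    intro z
    set P := ∏ i, phi (z i) with hP
    set Sz := ∑ i, lam i * z i ^ 2 with hS
    have hsq : Sz * Sz = ∑ i, ∑ j, (lam i * lam j) * (z i ^ 2 * z j ^ 2) := by
      rw [hS, Finset.sum_mul_sum]
      exact Finset.sum_congr rfl fun i _ => Finset.sum_congr rfl fun j _ => by ring
    have hexp : (c + (1/2) * Sz) ^ 2 = c^2 + c * Sz + (1/4) * (Sz * Sz) := by ring
    rw [hexp, hsq, mul_add, mul_add]
    congr 1
    · congr 1
      · ring
      · rw [hS, Finset.mul_sum, Finset.mul_sum]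
        exact Finset.sum_congr rfl fun i _ => by ring
    · rw [Finset.mul_sum, Finset.mul_sum]
      refine Finset.sum_congr rfl fun i _ => ?_
      rw [Finset.mul_sum, Finset.mul_sum]
      exact Finset.sum_congr rfl fun j _ => by ring
  simp_rw [hpt]
  have ib1 : Integrable (fun z : Fin p → ℝ => c^2 * (∏ i, phi (z i))
      + ∑ i, (c * lam i) * ((∏ k, phi (z k)) * z i ^ 2)) :=
    ((integrable_prod_phi p).const_mul _).add
      (integrable_finset_sum _ fun i _ => (integrable_prod_phi_pow i 2).const_mul _)
  have ib2 : Integrable (fun z : Fin p → ℝ =>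
      ∑ i, ∑ j, ((1/4) * (lam i * lam j)) * ((∏ k, phi (z k)) * (z i ^ 2 * z j ^ 2))) :=
    integrable_finset_sum _ fun i _ => integrable_finset_sum _ fun j _ =>
      (integrable_prod_phi_pow2 i j).const_mul _
  rw [integral_add ib1 ib2,
    integral_add ((integrable_prod_phi p).const_mul _)
      (integrable_finset_sum _ fun i _ => (integrable_prod_phi_pow i 2).const_mul _),
    integral_finset_sum _ fun i _ => (integrable_prod_phi_pow i 2).const_mul _,
    integral_finset_sum _ fun i _ => integrable_finset_sum _ fun j _ =>
      (integrable_prod_phi_pow2 i j).const_mul _,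
    integral_const_mul, integral_prod_phi]
  have hin : ∀ i : Fin p, (∫ a : Fin p → ℝ,
      ∑ j, ((1/4) * (lam i * lam j)) * ((∏ k, phi (a k)) * (a i ^ 2 * a j ^ 2)))
      = ∑ j, ((1/4) * (lam i * lam j)) * ((if i = j then (3:ℝ) else 1) * Real.sqrt (2 * π) ^ p) := by
    intro i
    rw [integral_finset_sum _ fun j _ => (integrable_prod_phi_pow2 i j).const_mul _]
    exact Finset.sum_congr rfl fun j _ => by
      rw [integral_const_mul, integral_prod_phi_pow_mix]
  simp_rw [hin, integral_const_mul, integral_prod_phi_pow_two]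
  have hsplit : ∀ i j : Fin p, ((1/4) * (lam i * lam j)) *
      ((if i = j then (3:ℝ) else 1) * Real.sqrt (2 * π) ^ p)
      = (1/4) * (lam i * lam j) * Real.sqrt (2 * π) ^ p
        + (if i = j then (1/2) * lam i * lam j * Real.sqrt (2 * π) ^ p else 0) := by
    intro i j
    by_cases hij : i = j <;> simp [hij] <;> ring
  simp_rw [hsplit, Finset.sum_add_distrib, Finset.sum_ite_eq, Finset.mem_univ, if_true]
  have e1 : ∑ i, ∑ j, (1/4) * (lam i * lam j) * Real.sqrt (2 * π) ^ p
      = (1/4) * ((∑ i, lam i) * (∑ i, lam i)) * Real.sqrt (2 * π) ^ p := by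
    calc ∑ i, ∑ j, (1/4) * (lam i * lam j) * Real.sqrt (2 * π) ^ p
        = ∑ i, (lam i * ((1/4) * Real.sqrt (2 * π) ^ p)) * ∑ j, lam j := by
          refine Finset.sum_congr rfl fun i _ => ?_
          rw [Finset.mul_sum]
          exact Finset.sum_congr rfl fun j _ => by ring
      _ = (∑ i, lam i * ((1/4) * Real.sqrt (2 * π) ^ p)) * ∑ j, lam j := by
          rw [← Finset.sum_mul]
      _ = ((∑ i, lam i) * ((1/4) * Real.sqrt (2 * π) ^ p)) * ∑ j, lam j := by
          rw [← Finset.sum_mul]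
      _ = (1/4) * ((∑ i, lam i) * (∑ i, lam i)) * Real.sqrt (2 * π) ^ p := by ring
  have e2 : ∑ i, ((1/2) * lam i * lam i * Real.sqrt (2 * π) ^ p)
      = (1/2) * (∑ i, lam i ^ 2) * Real.sqrt (2 * π) ^ p := by
    calc ∑ i, ((1/2) * lam i * lam i * Real.sqrt (2 * π) ^ p)
        = ∑ i, lam i ^ 2 * ((1/2) * Real.sqrt (2 * π) ^ p) :=
          Finset.sum_congr rfl fun i _ => by ring
      _ = (∑ i, lam i ^ 2) * ((1/2) * Real.sqrt (2 * π) ^ p) := by rw [← Finset.sum_mul]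
      _ = (1/2) * (∑ i, lam i ^ 2) * Real.sqrt (2 * π) ^ p := by ring
  rw [e1, e2, ← Finset.sum_mul, ← Finset.mul_sum]
  ring

/- ### Change of variables -/

lemma integral_comp_mulVec {p : ℕ} (T : Matrix (Fin p) (Fin p) ℝ) (hT : T.det ≠ 0)
    {g : (Fin p → ℝ) → ℝ} (hg : AEStronglyMeasurable g (volume : Measure (Fin p → ℝ))) :
    ∫ x, g x = |T.det| * ∫ z, g (T.mulVec z) := by
  have hmap := Real.map_matrix_volume_pi_eq_smul_volume_pi hT
  have hcont : Continuous (Matrix.toLin' T) := LinearMap.continuous_of_finiteDimensional _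
  have hvol : (volume : Measure (Fin p → ℝ))
      = ENNReal.ofReal |T.det| • Measure.map (Matrix.toLin' T) volume := by
    rw [hmap, smul_smul, ← ENNReal.ofReal_mul (abs_nonneg _), abs_inv,
      mul_inv_cancel₀ (abs_ne_zero.2 hT), ENNReal.ofReal_one, one_smul]
  calc ∫ x, g x
      = ∫ x, g x ∂(ENNReal.ofReal |T.det| • Measure.map (Matrix.toLin' T) volume) := by
        rw [← hvol]
    _ = |T.det| * ∫ x, g x ∂(Measure.map (Matrix.toLin' T) volume) := by
        rw [integral_smul_measure, ENNReal.toReal_ofReal (abs_nonneg _), smul_eq_mul]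
    _ = |T.det| * ∫ z, g (T.mulVec z) := by
        rw [integral_map hcont.measurable.aemeasurable]
        · simp_rw [Matrix.toLin'_apply]
        · refine hg.mono_ac ?_
          rw [hmap]
          exact Measure.smul_absolutelyContinuous

lemma dot_mulVec_comp {p : ℕ} (T A : Matrix (Fin p) (Fin p) ℝ) (z : Fin p → ℝ) :
    (T.mulVec z) ⬝ᵥ A.mulVec (T.mulVec z) = z ⬝ᵥ ((Tᵀ * A * T).mulVec z) := by
  conv_rhs => rw [← Matrix.mulVec_mulVec, ← Matrix.mulVec_mulVec, Matrix.dotProduct_mulVec,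
    Matrix.vecMul_transpose, Matrix.dotProduct_mulVec]
  rw [Matrix.dotProduct_mulVec]

theorem stmt7 {p : ℕ} (S0 S R : Matrix (Fin p) (Fin p) ℝ)
    (h0 : S0.PosDef) (h : S.PosDef) (hR : R.PosDef) (hRR : R * R = S0)
    (hM : (R * S⁻¹ * R).IsHermitian) :
    KLvar S0 S = (1 / 2) * (∑ i, (1 - hM.eigenvalues i) ^ 2) + (KLdiv S0 S) ^ 2 ∧
      (KLdiv S0 S ≤ ∑ i, (1 - hM.eigenvalues i) ^ 2 →
        (∑ i, (1 - hM.eigenvalues i) ^ 2) ≤ 1 →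
        KLvar S0 S ≤ (3 / 2) * ∑ i, (1 - hM.eigenvalues i) ^ 2) := by
  set U : Matrix (Fin p) (Fin p) ℝ := (hM.eigenvectorUnitary : Matrix (Fin p) (Fin p) ℝ) with hU
  set d : Fin p → ℝ := hM.eigenvalues with hd
  set T : Matrix (Fin p) (Fin p) ℝ := R * U with hT
  have hdetR : 0 < R.det := hR.det_pos
  have hdetS : 0 < S.det := h.det_pos
  have hdetS0 : 0 < S0.det := h0.det_pos
  have hRt : Rᵀ = R := by
    have h1 := hR.isHermitian.eq
    rwa [Matrix.conjTranspose_eq_transpose_of_trivial] at h1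
  have hRud : IsUnit R.det := hdetR.ne'.isUnit
  have hRinv : R * R⁻¹ = 1 := Matrix.mul_nonsing_inv R hRud
  have hRinv' : R⁻¹ * R = 1 := Matrix.nonsing_inv_mul R hRud
  have hUs : star U * U = 1 := Matrix.mem_unitaryGroup_iff'.mp hM.eigenvectorUnitary.2
  have hUt : Uᵀ = star U := by
    rw [Matrix.star_eq_conjTranspose, Matrix.conjTranspose_eq_transpose_of_trivial]
  have hdiag : star U * (R * S⁻¹ * R) * U = Matrix.diagonal d := by
    have h1 := hM.conjStarAlgAut_star_eigenvectorUnitary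
    rw [Unitary.conjStarAlgAut_star_apply] at h1
    simpa using h1
  have hTt : Tᵀ = star U * R := by rw [hT, Matrix.transpose_mul, hRt, hUt]
  have hT1 : Tᵀ * S0⁻¹ * T = 1 := by
    rw [hTt, hT, ← hRR, Matrix.mul_inv_rev]
    calc star U * R * (R⁻¹ * R⁻¹) * (R * U)
        = star U * ((R * R⁻¹) * (R⁻¹ * R)) * U := by
          simp only [Matrix.mul_assoc]
      _ = star U * U := by rw [hRinv, hRinv']; simp [Matrix.mul_assoc]
      _ = 1 := hUs
  have hT2 : Tᵀ * S⁻¹ * T = Matrix.diagonal d := by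
    rw [hTt, hT, ← hdiag]
    simp only [Matrix.mul_assoc]
  have hU2 : U.det * U.det = 1 := by
    have h1 := congrArg Matrix.det hUs
    rwa [Matrix.det_mul, Matrix.star_eq_conjTranspose, Matrix.det_conjTranspose, star_trivial,
      Matrix.det_one] at h1
  have habsU : |U.det| = 1 := by
    rcases mul_self_eq_one_iff.mp hU2 with h1 | h1 <;> rw [h1] <;> norm_num
  have hdetT : T.det = R.det * U.det := by rw [hT, Matrix.det_mul]
  have habsT : |T.det| = R.det := by
    rw [hdetT, abs_mul, habsU, mul_one, abs_of_pos hdetR]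
  have hdetT0 : T.det ≠ 0 := by
    intro hc
    rw [hdetT] at hc
    rcases mul_eq_zero.mp hc with h1 | h1
    · exact hdetR.ne' h1
    · rw [h1, mul_zero] at hU2; exact one_ne_zero hU2.symm
  have hS0det : S0.det = R.det ^ 2 := by rw [← hRR, Matrix.det_mul]; ring
  have hprodd : ∏ i, d i = S0.det * S.det⁻¹ := by
    have h1 := congrArg Matrix.det hT2
    rw [Matrix.det_mul, Matrix.det_mul, Matrix.det_transpose, Matrix.det_diagonal,
      Matrix.det_nonsing_inv, Ring.inverse_eq_inv'] at h1
    rw [← h1, hdetT, hS0det]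
    ring_nf
    have h2 : U.det ^ 2 = 1 := by rw [sq]; exact hU2
    rw [h2, mul_one]
  have hSinv : S⁻¹.PosDef := h.inv
  have hMpd : (R * S⁻¹ * R).PosDef := by
    refine Matrix.PosDef.of_dotProduct_mulVec_pos hM (fun x hx => ?_)
    have hx' : R.mulVec x ≠ 0 := by
      intro hc
      apply hx
      have : R⁻¹.mulVec (R.mulVec x) = 0 := by rw [hc, Matrix.mulVec_zero]
      rwa [Matrix.mulVec_mulVec, hRinv', Matrix.one_mulVec] at this
    have h2 := hSinv.dotProduct_mulVec_pos hx'
    have h3 : (R.mulVec x) ⬝ᵥ S⁻¹.mulVec (R.mulVec x) = x ⬝ᵥ ((R * S⁻¹ * R).mulVec x) := by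
      rw [dot_mulVec_comp, hRt]
    simp only [star_trivial] at h2 ⊢
    rwa [h3] at h2
  have hdpos : ∀ i, 0 < d i := fun i => hMpd.eigenvalues_pos i
  have hsumlog : ∑ i, Real.log (d i) = Real.log S0.det - Real.log S.det := by
    have h1 : Real.log (∏ i, d i) = ∑ i, Real.log (d i) :=
      Real.log_prod (fun i _ => (hdpos i).ne')
    rw [← h1, hprodd, Real.log_mul hdetS0.ne' (inv_ne_zero hdetS.ne'), Real.log_inv]
    ring
  set c : ℝ := (1/2) * (Real.log S.det - Real.log S0.det) with hcdef
  have hc : c = -(1/2) * ∑ i, Real.log (d i) := by rw [hcdef, hsumlog]; ring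
  -- positivity and continuity of the densities
  have hgpos : ∀ (A : Matrix (Fin p) (Fin p) ℝ), 0 < A.det → ∀ x, 0 < gaussDensity A x := by
    intro A hA x
    unfold gaussDensity
    have h2π : (0:ℝ) < 2 * π := by positivity
    exact mul_pos (mul_pos (Real.rpow_pos_of_pos h2π _) (Real.rpow_pos_of_pos hA _))
      (Real.exp_pos _)
  have hcontQ : ∀ (A : Matrix (Fin p) (Fin p) ℝ),
      Continuous fun x : Fin p → ℝ => x ⬝ᵥ A.mulVec x := by
    intro A
    simp only [dotProduct, Matrix.mulVec]
    exact continuous_finset_sum _ fun i _ => (continuous_apply i).mul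
      (continuous_finset_sum _ fun j _ => continuous_const.mul (continuous_apply j))
  have hcontG : ∀ (A : Matrix (Fin p) (Fin p) ℝ), Continuous (gaussDensity A) := by
    intro A
    unfold gaussDensity
    exact continuous_const.mul (Real.continuous_exp.comp (continuous_const.mul (hcontQ A⁻¹)))
  have hcontL : Continuous fun x => Real.log (gaussDensity S0 x / gaussDensity S x) :=
    Continuous.log ((hcontG S0).div (hcontG S) (fun x => (hgpos S hdetS x).ne'))
      (fun x => (div_pos (hgpos S0 hdetS0 x) (hgpos S hdetS x)).ne')
  -- pointwise formulas after the change of variables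
  have hq0 : ∀ z : Fin p → ℝ,
      (T.mulVec z) ⬝ᵥ S0⁻¹.mulVec (T.mulVec z) = ∑ i, z i ^ 2 := by
    intro z
    rw [dot_mulVec_comp, hT1, Matrix.one_mulVec]
    simp [dotProduct, sq]
  have hqS : ∀ z : Fin p → ℝ,
      (T.mulVec z) ⬝ᵥ S⁻¹.mulVec (T.mulVec z) = ∑ i, d i * z i ^ 2 := by
    intro z
    rw [dot_mulVec_comp, hT2]
    simp only [dotProduct, Matrix.mulVec_diagonal]
    exact Finset.sum_congr rfl fun i _ => by ring
  have hdetS0r : S0.det ^ (-(1:ℝ)/2 : ℝ) = R.det⁻¹ := by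
    rw [hS0det, ← Real.rpow_natCast R.det 2, ← Real.rpow_mul hdetR.le]
    norm_num
    exact Real.rpow_neg_one _
  have hgd0 : ∀ z : Fin p → ℝ, gaussDensity S0 (T.mulVec z)
      = (2 * π) ^ (-(p:ℝ)/2) * (R.det)⁻¹ * ∏ i, phi (z i) := by
    intro z
    unfold gaussDensity
    rw [hq0 z, hdetS0r]
    congr 1
    rw [Finset.mul_sum, Real.exp_sum]
    exact Finset.prod_congr rfl fun i _ => by rw [phi]
  have hlograt : ∀ z : Fin p → ℝ,
      Real.log (gaussDensity S0 (T.mulVec z) / gaussDensity S (T.mulVec z))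
      = c + (1/2) * ∑ i, (d i - 1) * z i ^ 2 := by
    intro z
    have h2π : (0:ℝ) < 2 * π := by positivity
    have hne1 : ((2 * π) ^ (-(p:ℝ)/2) : ℝ) ≠ 0 := (Real.rpow_pos_of_pos h2π _).ne'
    have hne2 : (S.det ^ (-(1:ℝ)/2 : ℝ)) ≠ 0 := (Real.rpow_pos_of_pos hdetS _).ne'
    have hne3 : (R.det⁻¹ : ℝ) ≠ 0 := inv_ne_zero hdetR.ne'
    rw [Real.log_div (hgpos S0 hdetS0 _).ne' (hgpos S hdetS _).ne', hgd0]
    unfold gaussDensity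
    rw [hqS z]
    have hphipos : ∀ t : ℝ, 0 < phi t := fun t => Real.exp_pos _
    rw [Real.log_mul (mul_ne_zero hne1 hne3) (Finset.prod_pos fun i _ => hphipos _).ne',
      Real.log_mul hne1 hne3,
      Real.log_mul (mul_ne_zero hne1 hne2) (Real.exp_ne_zero _),
      Real.log_mul hne1 hne2, Real.log_exp,
      Real.log_rpow hdetS, Real.log_inv]
    have hlp : Real.log (∏ i, phi (z i)) = -(1/2) * ∑ i, z i ^ 2 := by
      rw [Real.log_prod (fun i _ => by unfold phi; exact (Real.exp_pos _).ne'),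
        Finset.sum_congr rfl (fun i (_ : i ∈ univ) =>
          show Real.log (phi (z i)) = -(1/2) * z i ^ 2 by rw [phi, Real.log_exp]),
        ← Finset.mul_sum]
    rw [hlp]
    have hlogS0 : Real.log S0.det = 2 * Real.log R.det := by
      rw [hS0det, Real.log_pow]; norm_num
    have hsum : ∑ i, (d i - 1) * z i ^ 2 = (∑ i, d i * z i ^ 2) - ∑ i, z i ^ 2 := by
      rw [← Finset.sum_sub_distrib]
      exact Finset.sum_congr rfl fun i _ => by ring
    rw [hsum, hcdef, hlogS0]
    ring
  -- normalization constant
  have hnorm : (2 * π) ^ (-(p:ℝ)/2) * Real.sqrt (2 * π) ^ p = 1 := by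
    have h2π : (0:ℝ) < 2 * π := by positivity
    rw [Real.sqrt_eq_rpow, ← Real.rpow_natCast ((2*π) ^ ((1:ℝ)/2)) p,
      ← Real.rpow_mul h2π.le, ← Real.rpow_add h2π,
      show -(p:ℝ)/2 + 1/2 * (p:ℝ) = 0 by ring, Real.rpow_zero]
  -- KL divergence
  have hK : KLdiv S0 S = c + (1/2) * ∑ i, (d i - 1) := by
    unfold KLdiv
    rw [integral_comp_mulVec T hdetT0
      (g := fun x => gaussDensity S0 x * Real.log (gaussDensity S0 x / gaussDensity S x))
      (((hcontG S0).mul hcontL).aestronglyMeasurable)]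
    have hintg : (fun z : Fin p → ℝ => gaussDensity S0 (T.mulVec z) *
        Real.log (gaussDensity S0 (T.mulVec z) / gaussDensity S (T.mulVec z)))
        = fun z => ((2 * π) ^ (-(p:ℝ)/2) * R.det⁻¹) *
          ((∏ i, phi (z i)) * (c + (1/2) * ∑ i, (d i - 1) * z i ^ 2)) :=
      funext fun z => by rw [hlograt, hgd0]; ring
    rw [habsT, hintg, integral_const_mul, integral_P_mul_lin]
    have h9 : ∀ X : ℝ, R.det * ((2 * π) ^ (-(p:ℝ)/2) * R.det⁻¹ * (Real.sqrt (2*π) ^ p * X))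
        = (R.det * R.det⁻¹) * (((2 * π) ^ (-(p:ℝ)/2) * Real.sqrt (2*π) ^ p) * X) :=
      fun X => by ring
    rw [h9, mul_inv_cancel₀ hdetR.ne', hnorm]
    ring
  -- KL variance
  have hV : KLvar S0 S = (c + (1/2) * ∑ i, (d i - 1)) ^ 2 + (1/2) * ∑ i, (d i - 1) ^ 2 := by
    unfold KLvar
    rw [integral_comp_mulVec T hdetT0
      (g := fun x => gaussDensity S0 x * Real.log (gaussDensity S0 x / gaussDensity S x) ^ 2)
      (((hcontG S0).mul (hcontL.pow 2)).aestronglyMeasurable)]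
    have hintg : (fun z : Fin p → ℝ => gaussDensity S0 (T.mulVec z) *
        (Real.log (gaussDensity S0 (T.mulVec z) / gaussDensity S (T.mulVec z))) ^ 2)
        = fun z => ((2 * π) ^ (-(p:ℝ)/2) * R.det⁻¹) *
          ((∏ i, phi (z i)) * (c + (1/2) * ∑ i, (d i - 1) * z i ^ 2) ^ 2) :=
      funext fun z => by rw [hlograt, hgd0]; ring
    rw [habsT, hintg, integral_const_mul, integral_P_mul_sq]
    have h9 : ∀ X : ℝ, R.det * ((2 * π) ^ (-(p:ℝ)/2) * R.det⁻¹ * (Real.sqrt (2*π) ^ p * X))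
        = (R.det * R.det⁻¹) * (((2 * π) ^ (-(p:ℝ)/2) * Real.sqrt (2*π) ^ p) * X) :=
      fun X => by ring
    rw [h9, mul_inv_cancel₀ hdetR.ne', hnorm]
    ring
  have hss : ∑ i, (1 - d i) ^ 2 = ∑ i, (d i - 1) ^ 2 :=
    Finset.sum_congr rfl fun i _ => by ring
  have hmain : KLvar S0 S = (1/2) * (∑ i, (1 - d i) ^ 2) + (KLdiv S0 S) ^ 2 := by
    rw [hV, hK, hss]; ring
  refine ⟨hmain, fun h1 h2 => ?_⟩
  have hKnn : 0 ≤ KLdiv S0 S := by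
    rw [hK, hc]
    have h4 : 0 ≤ ∑ i, ((d i - 1) - Real.log (d i)) :=
      Finset.sum_nonneg fun i _ => sub_nonneg.2 (Real.log_le_sub_one_of_pos (hdpos i))
    rw [Finset.sum_sub_distrib] at h4
    linarith
  have hSsq_nn : 0 ≤ ∑ i, (1 - d i) ^ 2 := Finset.sum_nonneg fun i _ => sq_nonneg _
  rw [hmain]
  nlinarith [sq_nonneg (KLdiv S0 S)]
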